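/- Let k be a field of characteristic χ > 0 with algebraic closure K, let g, f_1,...,f_m ∈ k[t_1,...,t_n], let R be the range of the induced map f : K^n → K^m, and assume dim(closure of K^m \ R) ≤ m−2. If h : K^m → K satisfies h(f(a)) = g(a) for all a ∈ K^n, then there exist p ∈ k[x_1,...,x_m] and ν ∈ ℕ₀ such that h(b)^(χ^ν) = p(b) for all b ∈ R. -/

import Mathlib

open MvPolynomial

/-- `p` vanishes at every point of `A`. -/
def VanishesOn {k : Type*} [CommSemiring k] {m : ℕ} (A : Set (Fin m → k))
    (p : MvPolynomial (Fin m) k) : Prop :=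
  ∀ a ∈ A, eval a p = 0

/-- The Zariski closure of `A ⊆ k^m` has dimension at most `d` (with `dim ∅ = -1`):
for every index set `S` with more than `d` elements, the vanishing ideal of `A`
contains a nonzero polynomial supported on the variables in `S`. -/
def ZClosureDimLE {k : Type*} [CommSemiring k] {m : ℕ} (A : Set (Fin m → k)) (d : ℤ) : Prop :=
  ∀ S : Finset (Fin m), d < (S.card : ℤ) →
    ∃ p : MvPolynomial (Fin m) k, p ≠ 0 ∧
      p ∈ MvPolynomial.supported k (↑S : Set (Fin m)) ∧ VanishesOn A p

/-- The range of the polynomial map `k^n → k^m` induced by `f`. -/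
def polyRange {k : Type*} [CommSemiring k] {m n : ℕ}
    (f : Fin m → MvPolynomial (Fin n) k) : Set (Fin m → k) :=
  Set.range fun a : Fin n → k => fun i => eval a (f i)

/-- `f` is almost surjective on `k`: the Zariski closure of the complement of the range
of the induced map `k^n → k^m` has dimension at most `m - 2`. -/
def AlmostSurj {k : Type*} [CommSemiring k] {m n : ℕ}
    (f : Fin m → MvPolynomial (Fin n) k) : Prop :=
  ZClosureDimLE (polyRange f)ᶜ ((m : ℤ) - 2)

/-- `g` is determined by `f`. -/
def Determined {k : Type*} [CommSemiring k] {m n : ℕ}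
    (f : Fin m → MvPolynomial (Fin n) k) (g : MvPolynomial (Fin n) k) : Prop :=
  ∀ a b : Fin n → k, (∀ i, eval a (f i) = eval b (f i)) → eval a g = eval b g

section Aux

set_option maxHeartbeats 1000000
set_option synthInstance.maxHeartbeats 1000000

noncomputable section

/-- If `x ⊗ 1 = 1 ⊗ x` in `M ⊗[L] M` then `x ∈ L`. -/
theorem Stmt16Aux.tmul_comm_mem {K M : Type*} [Field K] [Field M] [Algebra K M]
    (L : IntermediateField K M) (x : M)
    (h : (x ⊗ₜ[L] (1:M) : TensorProduct L M M) = 1 ⊗ₜ[L] x) : x ∈ L := by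
  have hdual : ∀ ψ : Module.Dual L M, ψ 1 • x = ψ x • (1:M) := by
    intro ψ
    have := congrArg (fun z : TensorProduct L M M =>
      (TensorProduct.rid L M) (TensorProduct.map LinearMap.id ψ z)) h
    simpa using this
  have h1 : ∃ ψ : Module.Dual L M, ψ 1 ≠ 0 := by
    by_contra hcon
    push_neg at hcon
    exact one_ne_zero ((Module.forall_dual_apply_eq_zero_iff L (1 : M)).mp hcon)
  obtain ⟨ψ₀, hψ₀⟩ := h1
  have hψ1 : ((ψ₀ 1)⁻¹ • ψ₀) 1 = 1 := by simp [inv_mul_cancel₀ hψ₀]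
  have := hdual ((ψ₀ 1)⁻¹ • ψ₀)
  rw [hψ1, one_smul] at this
  rw [this, ← Algebra.algebraMap_eq_smul_one]
  have hc : algebraMap L M (((ψ₀ 1)⁻¹ • ψ₀) x) = ((((ψ₀ 1)⁻¹ • ψ₀) x : L) : M) := rfl
  rw [hc]
  exact SetLike.coe_mem _

/-- If `G(t) - G(s)` lies in the ideal generated by the `F i (t) - F i (s)`, then `G`
is a quotient of polynomials in the `F i`. -/
theorem Stmt16Aux.frac_rep {K : Type*} [Field K] {m n : ℕ}
    (F : Fin m → MvPolynomial (Fin n) K) (G : MvPolynomial (Fin n) K) (q : ℕ)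
    (I : Ideal (MvPolynomial (Fin n ⊕ Fin n) K))
    (hI : I = Ideal.span (Set.range fun i => rename Sum.inl (F i) - rename Sum.inr (F i)))
    (hpow : rename Sum.inl (G ^ q) - rename Sum.inr (G ^ q) ∈ I) :
    ∃ (A B : MvPolynomial (Fin m) K),
      aeval F B ≠ 0 ∧ G ^ q * aeval F B = aeval F A := by
  classical
  let M := FractionRing (MvPolynomial (Fin n) K)
  let ιa : MvPolynomial (Fin n) K →ₐ[K] M :=
    IsScalarTower.toAlgHom K (MvPolynomial (Fin n) K) M
  let L : IntermediateField K M := IntermediateField.adjoin K (Set.range fun i => ιa (F i))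
  have key : ∀ y : M, y ∈ L → (y ⊗ₜ[L] (1:M) : TensorProduct L M M) = 1 ⊗ₜ[L] y := by
    intro y hy
    have h1 : y = (⟨y, hy⟩ : L) • (1 : M) := by
      rw [← Algebra.algebraMap_eq_smul_one]; rfl
    conv_lhs => rw [h1]
    rw [TensorProduct.smul_tmul, ← h1]
  let Jl : MvPolynomial (Fin n) K →ₐ[K] (TensorProduct L M M) :=
    (Algebra.TensorProduct.includeLeft (S := K)).comp ιa
  let Jr : MvPolynomial (Fin n) K →ₐ[K] (TensorProduct L M M) :=
    { toRingHom :=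
        (Algebra.TensorProduct.includeRight (R := L) (A := M) (B := M)).toRingHom.comp
          (algebraMap (MvPolynomial (Fin n) K) M)
      commutes' := by
        intro c
        show (1 : M) ⊗ₜ[L] (algebraMap (MvPolynomial (Fin n) K) M (algebraMap K _ c))
          = algebraMap K (TensorProduct L M M) c
        have h1 : algebraMap (MvPolynomial (Fin n) K) M (algebraMap K _ c)
            = algebraMap K M c := (IsScalarTower.algebraMap_apply K _ M c).symm
        have h2 : algebraMap K M c ∈ L := by
          rw [IsScalarTower.algebraMap_apply K L M c]
          exact SetLike.coe_mem _
        have h3 : (algebraMap K (TensorProduct L M M) c)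
            = (algebraMap K M c) ⊗ₜ[L] (1 : M) := rfl
        rw [h1, h3, key _ h2] }
  let τ : MvPolynomial (Fin n ⊕ Fin n) K →ₐ[K] (TensorProduct L M M) :=
    aeval (Sum.elim (fun j => Jl (X j)) (fun j => Jr (X j)))
  have hτl : ∀ u : MvPolynomial (Fin n) K, τ (rename Sum.inl u) = Jl u := by
    intro u
    show aeval _ (rename Sum.inl u) = _
    rw [aeval_rename]
    have h0 : (Sum.elim (fun j => Jl (X j)) (fun j => Jr (X j))) ∘ Sum.inl
        = fun j => Jl (X j) := rfl
    rw [h0, ← comp_aeval_apply, aeval_X_left_apply]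
  have hτr : ∀ u : MvPolynomial (Fin n) K, τ (rename Sum.inr u) = Jr u := by
    intro u
    show aeval _ (rename Sum.inr u) = _
    rw [aeval_rename]
    have h0 : (Sum.elim (fun j => Jl (X j)) (fun j => Jr (X j))) ∘ Sum.inr
        = fun j => Jr (X j) := rfl
    rw [h0, ← comp_aeval_apply, aeval_X_left_apply]
  have hker : I ≤ RingHom.ker (τ : MvPolynomial (Fin n ⊕ Fin n) K →+* TensorProduct L M M) := by
    rw [hI, Ideal.span_le]
    rintro _ ⟨i, rfl⟩
    have : τ (rename Sum.inl (F i) - rename Sum.inr (F i)) = 0 := by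
      rw [map_sub, hτl, hτr]
      have hmem : ιa (F i) ∈ L := IntermediateField.subset_adjoin K _ ⟨i, rfl⟩
      show (ιa (F i)) ⊗ₜ[L] (1:M) - (1:M) ⊗ₜ[L] (ιa (F i)) = 0
      rw [key _ hmem, sub_self]
    exact this
  have hten : (ιa (G ^ q)) ⊗ₜ[L] (1:M) = (1:M) ⊗ₜ[L] (ιa (G ^ q)) := by
    have h0 : τ (rename Sum.inl (G ^ q) - rename Sum.inr (G ^ q)) = 0 := hker hpow
    rw [map_sub, hτl, hτr] at h0
    exact sub_eq_zero.mp h0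
  have hxL : ιa (G ^ q) ∈ L := Stmt16Aux.tmul_comm_mem L _ hten
  rw [IntermediateField.mem_adjoin_range_iff] at hxL
  obtain ⟨r, s, hrs⟩ := hxL
  have hconv : ∀ u : MvPolynomial (Fin m) K, aeval (fun i => ιa (F i)) u = ιa (aeval F u) := by
    intro u; rw [comp_aeval_apply]
  rw [hconv, hconv] at hrs
  have hι : Function.Injective ιa := IsFractionRing.injective (MvPolynomial (Fin n) K) M
  by_cases hs : aeval F s = 0
  · refine ⟨0, 1, ?_, ?_⟩
    · rw [map_one]; exact one_ne_zero
    · have h0 : ιa (G ^ q) = 0 := by rw [hrs, hs, map_zero, div_zero]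
      have hG : G ^ q = 0 := by apply hι; rw [h0, map_zero]
      rw [hG, zero_mul, map_zero]
  · refine ⟨r, s, hs, ?_⟩
    apply hι
    have hsne : ιa (aeval F s) ≠ 0 := fun hc => hs (hι (by rw [hc, map_zero]))
    rw [map_mul, hrs, div_mul_cancel₀ _ hsne]

/-- Pure-inseparability step: some Frobenius power of `G` is a quotient of
polynomials in the `F i`. -/
theorem Stmt16Aux.insep {K : Type*} [Field K] [IsAlgClosed K] (χ : ℕ) [CharP K χ]
    (hp : χ.Prime) {m n : ℕ}
    (F : Fin m → MvPolynomial (Fin n) K) (G : MvPolynomial (Fin n) K)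
    (hdet : ∀ a b : Fin n → K, (∀ i, eval a (F i) = eval b (F i)) → eval a G = eval b G) :
    ∃ (ν : ℕ) (A B : MvPolynomial (Fin m) K),
      aeval F B ≠ 0 ∧ G ^ χ ^ ν * aeval F B = aeval F A := by
  classical
  haveI : Fact χ.Prime := ⟨hp⟩
  set I : Ideal (MvPolynomial (Fin n ⊕ Fin n) K) :=
    Ideal.span (Set.range fun i => rename Sum.inl (F i) - rename Sum.inr (F i)) with hI
  have hrad : rename Sum.inl G - rename Sum.inr G ∈ I.radical := by
    rw [← vanishingIdeal_zeroLocus_eq_radical (K := K), mem_vanishingIdeal_iff]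
    intro x hx
    show eval x _ = 0
    have hgen : ∀ i, eval (x ∘ Sum.inl) (F i) = eval (x ∘ Sum.inr) (F i) := by
      intro i
      have : eval x (rename Sum.inl (F i) - rename Sum.inr (F i)) = 0 :=
        by exact
          (mem_zeroLocus_iff.mp hx) _ (Ideal.subset_span ⟨i, rfl⟩)
      rw [map_sub, eval_rename, eval_rename] at this
      exact sub_eq_zero.mp this
    rw [map_sub, eval_rename, eval_rename, hdet _ _ hgen, sub_self]
  obtain ⟨N, hN⟩ := Ideal.mem_radical_iff.mp hrad
  have hNq : N ≤ χ ^ N := Nat.le_of_lt (Nat.lt_pow_self (n := N) hp.one_lt)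
  haveI : CharP (MvPolynomial (Fin n ⊕ Fin n) K) χ :=
    charP_of_injective_ringHom (C_injective (Fin n ⊕ Fin n) K) χ
  have hpow : rename Sum.inl (G ^ χ ^ N) - rename Sum.inr (G ^ χ ^ N) ∈ I := by
    have h1 : (rename Sum.inl G - rename Sum.inr G) ^ χ ^ N ∈ I := by
      have h2 : (rename Sum.inl G - rename Sum.inr G) ^ χ ^ N
          = (rename Sum.inl G - rename Sum.inr G) ^ N
            * (rename Sum.inl G - rename Sum.inr G) ^ (χ ^ N - N) := by
        rw [← pow_add, Nat.add_sub_cancel' hNq]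
      rw [h2]
      exact Ideal.mul_mem_right _ _ hN
    rwa [sub_pow_char_pow, ← map_pow, ← map_pow] at h1
  obtain ⟨A, B, hB, hAB⟩ := Stmt16Aux.frac_rep F G (χ ^ N) I hI hpow
  exact ⟨N, A, B, hB, hAB⟩

theorem Stmt16Aux.mem_vars_iff_degreeOf_ne_zero {K : Type*} [CommSemiring K] {σ : Type*}
    (p : MvPolynomial σ K) (i : σ) : i ∈ p.vars ↔ degreeOf i p ≠ 0 := by
  classical
  rw [vars_def, Multiset.mem_toFinset, degreeOf_def, ← Multiset.count_pos,
    Nat.pos_iff_ne_zero]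

/-- A polynomial genuinely involving the variable `i₀` cannot divide a nonzero
polynomial supported away from `i₀`. -/
theorem Stmt16Aux.not_dvd_supported {K : Type*} [Field K] {m : ℕ}
    (q p : MvPolynomial (Fin m) K)
    (i₀ : Fin m) (hq : i₀ ∈ q.vars) (hp : p ≠ 0)
    (hsupp : p ∈ supported K ((Finset.univ.erase i₀ : Finset (Fin m)) : Set (Fin m))) :
    ¬ q ∣ p := by
  intro hdvd
  obtain ⟨m', rfl⟩ : ∃ m', m = m' + 1 :=
    ⟨m - 1, (Nat.succ_pred_eq_of_pos i₀.pos).symm⟩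
  set sw : Fin (m' + 1) ≃ Fin (m' + 1) := Equiv.swap i₀ 0 with hsw
  have hdegq : degreeOf 0 (rename sw q) = degreeOf i₀ q := by
    have := degreeOf_rename_of_injective (p := q) (f := sw) sw.injective i₀
    rwa [show sw i₀ = 0 from Equiv.swap_apply_left i₀ 0] at this
  have hdegp : degreeOf 0 (rename sw p) = degreeOf i₀ p := by
    have := degreeOf_rename_of_injective (p := p) (f := sw) sw.injective i₀
    rwa [show sw i₀ = 0 from Equiv.swap_apply_left i₀ 0] at this
  have hpvars : degreeOf i₀ p = 0 := by
    by_contra hcon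
    have h1 : i₀ ∈ p.vars := (Stmt16Aux.mem_vars_iff_degreeOf_ne_zero p i₀).mpr hcon
    have := (mem_supported.mp hsupp) h1
    simp at this
  have hdvd1 : rename sw q ∣ rename sw p := map_dvd (rename (R := K) sw) hdvd
  have hdvd2 : (finSuccEquiv K m') (rename sw q) ∣ (finSuccEquiv K m') (rename sw p) :=
    map_dvd (finSuccEquiv K m') hdvd1
  have hpne : (finSuccEquiv K m') (rename sw p) ≠ 0 := by
    intro hc
    apply hp
    have h1 : rename sw p = 0 := by
      apply (finSuccEquiv K m').injective
      rw [hc, map_zero]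
    exact (rename_injective sw sw.injective) (by rw [h1, map_zero])
  have hle := Polynomial.natDegree_le_of_dvd hdvd2 hpne
  rw [natDegree_finSuccEquiv, natDegree_finSuccEquiv, hdegq, hdegp, hpvars,
    Nat.le_zero] at hle
  exact ((Stmt16Aux.mem_vars_iff_degreeOf_ne_zero q i₀).mp hq) hle

theorem Stmt16Aux.eval_comp_aeval {K : Type*} [CommSemiring K] {m n : ℕ}
    (F : Fin m → MvPolynomial (Fin n) K) (u : MvPolynomial (Fin m) K) (a : Fin n → K) :
    eval a (aeval F u) = eval (fun i => eval a (F i)) u := by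
  have h1 : eval a (aeval F u) = aeval a (aeval F u) := by
    rw [← coe_aeval_eq_eval]; rfl
  have h2 : eval (fun i => eval a (F i)) u = aeval (fun i => eval a (F i)) u := by
    rw [← coe_aeval_eq_eval]; rfl
  rw [h1, h2, comp_aeval_apply]
  rfl

/-- Almost-surjectivity lets us clear the denominator. -/
theorem Stmt16Aux.clear_denom {K : Type*} [Field K] [IsAlgClosed K] {m n : ℕ}
    (F : Fin m → MvPolynomial (Fin n) K) (R : Set (Fin m → K))
    (hRrep : ∀ b ∈ R, ∃ a : Fin n → K, b = fun i => eval a (F i))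
    (hAS' : ∀ i₀ : Fin m, ∃ p : MvPolynomial (Fin m) K, p ≠ 0 ∧
        p ∈ supported K ((Finset.univ.erase i₀ : Finset (Fin m)) : Set (Fin m)) ∧
        ∀ b ∉ R, eval b p = 0)
    (G : MvPolynomial (Fin n) K) :
    ∀ B A : MvPolynomial (Fin m) K, aeval F B ≠ 0 → G * aeval F B = aeval F A →
      ∃ P : MvPolynomial (Fin m) K, G = aeval F P := by
  intro B
  refine WellFounded.induction (wellFounded_dvdNotUnit (α := MvPolynomial (Fin m) K))
    (C := fun B => ∀ A : MvPolynomial (Fin m) K,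
      aeval F B ≠ 0 → G * aeval F B = aeval F A →
        ∃ P : MvPolynomial (Fin m) K, G = aeval F P) B ?_
  clear B
  intro B IH A hB heq
  by_cases hu : IsUnit B
  · obtain ⟨v, hv⟩ := hu.exists_right_inv
    refine ⟨A * v, ?_⟩
    have h1 : aeval F (A * v) = aeval F A * aeval F v := map_mul _ _ _
    rw [h1, ← heq]
    have h2 : aeval F B * aeval F v = 1 := by rw [← map_mul, hv, map_one]
    rw [mul_assoc, h2, mul_one]
  · have hB0 : B ≠ 0 := fun hc => hB (by rw [hc, map_zero])
    obtain ⟨qir, hqirr, hqdvd⟩ := WfDvdMonoid.exists_irreducible_factor hu hB0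
    obtain ⟨B', rfl⟩ := hqdvd
    have hqvars : ∃ i₀, i₀ ∈ qir.vars := by
      by_contra hcon
      push_neg at hcon
      have hsub : qir ∈ supported K (∅ : Set (Fin m)) := by
        rw [mem_supported]
        intro i hi
        exact absurd hi (by simpa using hcon i)
      rw [supported_empty, Algebra.mem_bot] at hsub
      obtain ⟨c, hc⟩ := hsub
      have hc0 : c ≠ 0 := by
        rintro rfl
        apply hqirr.ne_zero
        rw [← hc, map_zero]
      exact hqirr.not_isUnit (by
        rw [← hc]
        exact IsUnit.of_mul_eq_one ((algebraMap K (MvPolynomial (Fin m) K)) c⁻¹)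
          (by rw [← map_mul, mul_inv_cancel₀ hc0, map_one]))
    obtain ⟨i₀, hi₀⟩ := hqvars
    obtain ⟨p, hp0, hpsupp, hpvan⟩ := hAS' i₀
    have hmem : A * p ∈ vanishingIdeal K (zeroLocus K (Ideal.span {qir * B'})) := by
      rw [mem_vanishingIdeal_iff]
      intro b hb
      show eval b _ = 0
      have hbz : eval b (qir * B') = 0 :=
        by exact
          (mem_zeroLocus_iff.mp hb) _ (Ideal.subset_span rfl)
      by_cases hbR : b ∈ R
      · obtain ⟨a, rfl⟩ := hRrep b hbR
        have h1 : eval a (G * aeval F (qir * B')) = eval a (aeval F A) := by rw [heq]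
        rw [map_mul, Stmt16Aux.eval_comp_aeval, hbz, mul_zero] at h1
        rw [map_mul, ← Stmt16Aux.eval_comp_aeval F A a, ← h1, zero_mul]
      · rw [map_mul, hpvan b hbR, mul_zero]
    rw [vanishingIdeal_zeroLocus_eq_radical] at hmem
    obtain ⟨e, he⟩ := Ideal.mem_radical_iff.mp hmem
    have hdvd : qir ∣ (A * p) ^ e :=
      dvd_trans (Dvd.intro B' rfl) (Ideal.mem_span_singleton.mp he)
    have hqprime : Prime qir := UniqueFactorizationMonoid.irreducible_iff_prime.mp hqirr
    have hdvd2 : qir ∣ A * p := hqprime.dvd_of_dvd_pow hdvd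
    rcases hqprime.2.2 _ _ hdvd2 with hA | hp
    · obtain ⟨A', rfl⟩ := hA
      have hq0 : aeval F qir ≠ 0 := fun hc => hB (by rw [map_mul, hc, zero_mul])
      have hB'0 : aeval F B' ≠ 0 := fun hc => hB (by rw [map_mul, hc, mul_zero])
      have heq' : G * aeval F B' = aeval F A' := by
        have h1 : aeval F qir * (G * aeval F B') = aeval F qir * aeval F A' := by
          rw [map_mul, map_mul] at heq
          ring_nf
          ring_nf at heq
          linear_combination heq
        exact mul_left_cancel₀ hq0 h1
      exact IH B' ⟨fun hc => hB'0 (by rw [hc, map_zero]), qir, hqirr.not_isUnit, mul_comm qir B'⟩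
        A' hB'0 heq'
    · exact absurd hp (Stmt16Aux.not_dvd_supported qir p i₀ hi₀ hp0 hpsupp)

/-- Descend a polynomial identity over the algebraic closure to the base field. -/
theorem Stmt16Aux.descend {k K : Type*} [Field k] [Field K] [Algebra k K] {m n : ℕ}
    (f : Fin m → MvPolynomial (Fin n) k) (G : MvPolynomial (Fin n) k)
    (P : MvPolynomial (Fin m) K)
    (hP : aeval (fun i => MvPolynomial.map (algebraMap k K) (f i)) P
        = MvPolynomial.map (algebraMap k K) G) :
    ∃ p : MvPolynomial (Fin m) k, G = aeval f p := by
  classical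
  obtain ⟨W', hcompl⟩ := Submodule.exists_isCompl (LinearMap.range (Algebra.linearMap k K))
  set e : k ≃ₗ[k] LinearMap.range (Algebra.linearMap k K) :=
    LinearEquiv.ofInjective (Algebra.linearMap k K)
      (FaithfulSMul.algebraMap_injective k K) with he
  set π : K →ₗ[k] k :=
    e.symm.toLinearMap ∘ₗ (Submodule.linearProjOfIsCompl _ _ hcompl) with hπ
  have hπalg : ∀ c : k, π (algebraMap k K c) = c := by
    intro c
    have hmem : algebraMap k K c ∈ LinearMap.range (Algebra.linearMap k K) :=
      ⟨c, rfl⟩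
    have h1 : (Submodule.linearProjOfIsCompl _ _ hcompl) (algebraMap k K c)
        = ⟨algebraMap k K c, hmem⟩ :=
      Submodule.linearProjOfIsCompl_apply_left hcompl ⟨algebraMap k K c, hmem⟩
    have h2 : e c = ⟨algebraMap k K c, hmem⟩ := Subtype.ext rfl
    rw [hπ]
    simp only [LinearMap.comp_apply, h1, ← h2, LinearEquiv.coe_toLinearMap,
      LinearEquiv.symm_apply_apply]
  have hπsmul : ∀ (c : K) (d : k), π (c * algebraMap k K d) = d * π c := by
    intro c d
    rw [mul_comm, ← Algebra.smul_def, map_smul, smul_eq_mul]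
  refine ⟨∑ α ∈ P.support, monomial α (π (coeff α P)), ?_⟩
  apply MvPolynomial.ext
  intro μ
  have hcoeff : algebraMap k K (coeff μ G)
      = coeff μ (aeval (fun i => MvPolynomial.map (algebraMap k K) (f i)) P) := by
    rw [hP, coeff_map]
  have hG : coeff μ G
      = π (coeff μ (aeval (fun i => MvPolynomial.map (algebraMap k K) (f i)) P)) := by
    rw [← hcoeff, hπalg]
  rw [hG]
  conv_lhs => rw [MvPolynomial.as_sum P]
  rw [map_sum, coeff_sum, map_sum, map_sum, coeff_sum]
  apply Finset.sum_congr rfl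
  intro α _
  rw [aeval_monomial, aeval_monomial]
  have hprod : (MvPolynomial.map (algebraMap k K)) (α.prod fun i e => f i ^ e)
      = α.prod fun i e => (MvPolynomial.map (algebraMap k K) (f i)) ^ e := by
    rw [Finsupp.prod, Finsupp.prod, map_prod]
    simp [map_pow]
  rw [← hprod]
  have halg1 : (algebraMap K (MvPolynomial (Fin n) K)) (coeff α P) = C (coeff α P) := rfl
  have halg2 : (algebraMap k (MvPolynomial (Fin n) k)) (π (coeff α P)) = C (π (coeff α P)) := rfl
  rw [halg1, halg2, coeff_C_mul, coeff_C_mul, coeff_map]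
  rw [hπsmul]
  ring

end

end Aux

set_option maxHeartbeats 1000000 in
theorem stmt16 {k : Type*} [Field k] (χ : ℕ) [CharP k χ] (hχ : 0 < χ) {m n : ℕ}
    (f : Fin m → MvPolynomial (Fin n) k) (g : MvPolynomial (Fin n) k)
    (R : Set (Fin m → AlgebraicClosure k))
    (hR : R = polyRange fun i =>
      MvPolynomial.map (algebraMap k (AlgebraicClosure k)) (f i))
    (hAS : ZClosureDimLE Rᶜ ((m : ℤ) - 2))
    (h : (Fin m → AlgebraicClosure k) → AlgebraicClosure k)
    (hcomp : ∀ a : Fin n → AlgebraicClosure k,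
      h (fun i => eval a (MvPolynomial.map (algebraMap k (AlgebraicClosure k)) (f i)))
        = eval a (MvPolynomial.map (algebraMap k (AlgebraicClosure k)) g)) :
    ∃ p : MvPolynomial (Fin m) k, ∃ ν : ℕ, ∀ b ∈ R,
      h b ^ χ ^ ν = eval b (MvPolynomial.map (algebraMap k (AlgebraicClosure k)) p) := by
  classical
  haveI : CharP (AlgebraicClosure k) χ :=
    charP_of_injective_algebraMap (algebraMap k (AlgebraicClosure k)).injective χ
  have hprime : χ.Prime :=
    (CharP.char_is_prime_or_zero k χ).resolve_right (by omega)
  set F : Fin m → MvPolynomial (Fin n) (AlgebraicClosure k) :=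
    fun i => MvPolynomial.map (algebraMap k (AlgebraicClosure k)) (f i) with hF
  set Gbar : MvPolynomial (Fin n) (AlgebraicClosure k) :=
    MvPolynomial.map (algebraMap k (AlgebraicClosure k)) g with hGbar
  have hdet : ∀ a b : Fin n → AlgebraicClosure k,
      (∀ i, eval a (F i) = eval b (F i)) → eval a Gbar = eval b Gbar := by
    intro a b hab
    have hfun : (fun i => eval a (F i)) = fun i => eval b (F i) := funext hab
    have h1 : h (fun i => eval a (F i)) = eval a Gbar := hcomp a
    have h2 : h (fun i => eval b (F i)) = eval b Gbar := hcomp b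
    rw [← h1, ← h2, hfun]
  obtain ⟨ν, A, B, hB, heq⟩ := Stmt16Aux.insep χ hprime F Gbar hdet
  have heq' : MvPolynomial.map (algebraMap k (AlgebraicClosure k)) (g ^ χ ^ ν) * aeval F B
      = aeval F A := by
    rw [map_pow, ← hGbar]
    exact heq
  have hRrep : ∀ b ∈ R, ∃ a : Fin n → AlgebraicClosure k, b = fun i => eval a (F i) := by
    intro b hb
    rw [hR] at hb
    obtain ⟨a, ha⟩ := hb
    exact ⟨a, ha.symm⟩
  have hAS' : ∀ i₀ : Fin m, ∃ p : MvPolynomial (Fin m) (AlgebraicClosure k), p ≠ 0 ∧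
      p ∈ supported (AlgebraicClosure k)
        ((Finset.univ.erase i₀ : Finset (Fin m)) : Set (Fin m)) ∧
      ∀ b ∉ R, eval b p = 0 := by
    intro i₀
    have hm : 1 ≤ m := i₀.pos
    have hcard : ((m : ℤ) - 2) < (((Finset.univ.erase i₀ : Finset (Fin m)).card : ℤ)) := by
      rw [Finset.card_erase_of_mem (Finset.mem_univ i₀), Finset.card_univ, Fintype.card_fin]
      rw [Nat.cast_sub hm]
      push_cast
      omega
    obtain ⟨p, hp0, hsupp, hvan⟩ := hAS _ hcard
    exact ⟨p, hp0, hsupp, fun b hb => hvan b (Set.mem_compl hb)⟩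
  obtain ⟨P, hP⟩ := Stmt16Aux.clear_denom F R hRrep hAS'
    (MvPolynomial.map (algebraMap k (AlgebraicClosure k)) (g ^ χ ^ ν)) B A hB heq'
  obtain ⟨p, hp⟩ := Stmt16Aux.descend f (g ^ χ ^ ν) P (by rw [← hF, ← hP])
  refine ⟨p, ν, ?_⟩
  intro b hb
  obtain ⟨a, rfl⟩ := hRrep b hb
  have hhb : h (fun i => eval a (F i)) = eval a Gbar := hcomp a
  rw [hhb]
  have hstep1 : eval a Gbar ^ χ ^ ν
      = eval a (MvPolynomial.map (algebraMap k (AlgebraicClosure k)) (g ^ χ ^ ν)) := by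
    rw [map_pow, ← hGbar, ← map_pow]
  rw [hstep1, hp]
  -- now reduce both sides
  have hbridge : MvPolynomial.map (algebraMap k (AlgebraicClosure k)) (aeval f p)
      = aeval F (MvPolynomial.map (algebraMap k (AlgebraicClosure k)) p) := by
    rw [aeval_map_algebraMap]
    have h1 := comp_aeval_apply (f := f)
      (φ := (MvPolynomial.mapAlgHom (σ := Fin n) (Algebra.ofId k (AlgebraicClosure k)))) p
    have h2 : ∀ u : MvPolynomial (Fin n) k,
        (MvPolynomial.mapAlgHom (σ := Fin n) (Algebra.ofId k (AlgebraicClosure k))) u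
          = MvPolynomial.map (algebraMap k (AlgebraicClosure k)) u := fun u => rfl
    rw [h2] at h1
    simp only [h2] at h1
    exact h1
  rw [hbridge, Stmt16Aux.eval_comp_aeval]
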